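/- Define ζ(μ̄) = (μ̄·T·σᵥ² + tr(Q)/μ̄)/(2 − μ̄·T) for μ̄ ∈ (0, 2/T), where T = tr(R) > 0, σᵥ² > 0, tr(Q) > 0. Then ζ is minimized at the unique μᵒ ∈ (0, 2/T) satisfying T·σᵥ²·(μᵒ)² + T·tr(Q)·μᵒ − tr(Q) = 0, namely μᵒ = (−T·tr(Q) + √(T²tr(Q)² + 4σᵥ²·T·tr(Q)))/(2T·σᵥ²), and this μᵒ indeed lies in (0, 2/T). -/

import Mathlib

open Set

set_option maxHeartbeats 1000000 in
theorem stmt_11 (T σv2 trQ : ℝ) (hT : T > 0) (hv : σv2 > 0) (hQ : trQ > 0)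
    (ζ : ℝ → ℝ)
    (hζ : ∀ μ ∈ Ioo 0 (2 / T), ζ μ = (μ * T * σv2 + trQ / μ) / (2 - μ * T))
    (μo : ℝ)
    (hμo : μo = (-(T * trQ) + Real.sqrt (T^2 * trQ^2 + 4 * σv2 * T * trQ))
      / (2 * T * σv2)) :
    μo ∈ Ioo 0 (2 / T) ∧
    T * σv2 * μo^2 + T * trQ * μo - trQ = 0 ∧
    (∀ μ ∈ Ioo 0 (2 / T), T * σv2 * μ^2 + T * trQ * μ - trQ = 0 → μ = μo) ∧
    (∀ μ ∈ Ioo 0 (2 / T), ζ μo ≤ ζ μ) := by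
  set D : ℝ := T^2 * trQ^2 + 4 * σv2 * T * trQ with hD
  have hDpos : 0 < D := by positivity
  set s : ℝ := Real.sqrt D with hs
  have hs2 : s^2 = D := Real.sq_sqrt hDpos.le
  have hsgt : T * trQ < s := by
    rw [hs]
    rw [show T * trQ = Real.sqrt ((T*trQ)^2) from (Real.sqrt_sq (by positivity)).symm]
    apply Real.sqrt_lt_sqrt (by positivity)
    nlinarith [mul_pos (mul_pos hv hT) hQ]
  have hslt : s < T * trQ + 4 * σv2 := by
    rw [hs]
    apply Real.sqrt_lt' (by positivity) |>.mpr
    nlinarith [mul_pos (mul_pos hv hT) hQ, mul_pos hv hv]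
  have h2a : (0:ℝ) < 2 * T * σv2 := by positivity
  have hμeq : μo * (2 * T * σv2) = -(T * trQ) + s := by
    rw [hμo]; field_simp
  have hμpos : 0 < μo := by
    have : 0 < μo * (2 * T * σv2) := by rw [hμeq]; linarith
    by_contra hc
    push_neg at hc
    nlinarith [this, h2a]
  have hμlt : μo < 2 / T := by
    rw [lt_div_iff₀ hT]
    nlinarith [hμeq, hslt]
  have hquad : T * σv2 * μo^2 + T * trQ * μo - trQ = 0 := by
    have h1 : (μo * (2 * T * σv2))^2 = (-(T * trQ) + s)^2 := by rw [hμeq]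
    have ha : (4 * T * σv2) ≠ 0 := by positivity
    have h4 : 4 * T * σv2 * (T * σv2 * μo^2 + T * trQ * μo - trQ) = 0 := by
      linear_combination h1 + (2 * T * trQ) * hμeq + hs2 + hD
    exact (mul_eq_zero.mp h4).resolve_left ha
  have hIoo : μo ∈ Ioo 0 (2 / T) := ⟨hμpos, hμlt⟩
  refine ⟨hIoo, hquad, ?_, ?_⟩
  · intro μ hμ h
    have hμp : 0 < μ := hμ.1
    have hfac : (μ - μo) * (T * σv2 * (μ + μo) + T * trQ) = 0 := by
      nlinarith [h, hquad]
    rcases mul_eq_zero.mp hfac with h1 | h2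
    · linarith
    · nlinarith [h2, hμp, hμpos]
  · intro μ hμ
    have hμp : 0 < μ := hμ.1
    have hμlt2 : μ < 2 / T := hμ.2
    have hdμ : 0 < 2 - μ * T := by
      have := (lt_div_iff₀ hT).mp hμlt2; linarith
    have hdμo : 0 < 2 - μo * T := by
      have := (lt_div_iff₀ hT).mp hμlt; linarith
    have hζ' : ∀ x, 0 < x → ζ x = (x * T * σv2 + trQ / x) / (2 - x * T) →
        ζ x = (x^2 * T * σv2 + trQ) / (x * (2 - x * T)) := by
      intro x hx hxeq
      rw [hxeq]; field_simp
    rw [hζ' μ hμp (hζ μ hμ), hζ' μo hμpos (hζ μo hIoo)]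
    rw [div_le_div_iff₀ (by positivity) (by positivity)]
    have key : (μ^2 * T * σv2 + trQ) * (μo * (2 - μo * T)) -
        (μo^2 * T * σv2 + trQ) * (μ * (2 - μ * T)) =
        (μ - μo)^2 * (2 * T * σv2 * μo + trQ * T) := by
      linear_combination (2 * (μ - μo)) * hquad
    nlinarith [key, mul_nonneg (sq_nonneg (μ - μo)) (by positivity : (0:ℝ) ≤ 2 * T * σv2 * μo + trQ * T)]
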